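/- Let m ≥ 1 and let D₁, D₂ be m×m diagonal matrices all of whose diagonal entries are 1 or −1, with det D₁ = det D₂ = 1 and trace(D₁) = trace(D₂). Then there exists an m×m signed permutation matrix Q with det Q = 1 such that Δ(Q) = D₁ and Δ(TR(Q)) = D₂. -/

import Mathlib

open Matrix
open scoped Classical

noncomputable section

def IsSignedPerm {m : ℕ} (Q : Matrix (Fin m) (Fin m) ℝ) : Prop :=
  (∀ i, ∃! j, Q i j ≠ 0) ∧ (∀ j, ∃! i, Q i j ≠ 0) ∧
    ∀ i j, Q i j ≠ 0 → Q i j = 1 ∨ Q i j = -1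

def NE {m : ℕ} (Q : Matrix (Fin m) (Fin m) ℝ) (i j : Fin m) : ℕ :=
  (Finset.univ.filter fun p : Fin m × Fin m => p.1 < i ∧ j < p.2 ∧ Q p.1 p.2 ≠ 0).card

def SW {m : ℕ} (Q : Matrix (Fin m) (Fin m) ℝ) (i j : Fin m) : ℕ := NE Qᵀ j i

def deltaRow {m : ℕ} (Q : Matrix (Fin m) (Fin m) ℝ) (i : Fin m) : ℝ :=
  ∑ j, Q i j * (-1 : ℝ) ^ NE Q i j

def DeltaM {m : ℕ} (Q : Matrix (Fin m) (Fin m) ℝ) : Matrix (Fin m) (Fin m) ℝ :=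
  Matrix.diagonal (deltaRow Q)

def sFun {m : ℕ} (Q : Matrix (Fin m) (Fin m) ℝ) : ℝ := (DeltaM Q).trace

def Jplus (m : ℕ) : Matrix (Fin m) (Fin m) ℝ :=
  Matrix.diagonal fun i => (-1 : ℝ) ^ (i : ℕ)

def TR {m : ℕ} (Q : Matrix (Fin m) (Fin m) ℝ) : Matrix (Fin m) (Fin m) ℝ :=
  Jplus m * Qᵀ * Jplus m

def Amat (m : ℕ) : Matrix (Fin m) (Fin m) ℝ :=
  Matrix.of fun i j => if (i : ℕ) + (j : ℕ) = m - 1 then (-1 : ℝ) ^ (i : ℕ) else 0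

def AD {m : ℕ} (Q : Matrix (Fin m) (Fin m) ℝ) : Matrix (Fin m) (Fin m) ℝ :=
  (Amat m)ᵀ * Q * Amat m

def IsUpperPos {m : ℕ} (R : Matrix (Fin m) (Fin m) ℝ) : Prop :=
  (∀ i j, j < i → R i j = 0) ∧ ∀ i, 0 < R i i

def Wmat {m : ℕ} (γ : ℝ → Fin m → ℝ) (t : ℝ) : Matrix (Fin m) (Fin m) ℝ :=
  Matrix.of fun i j => iteratedDeriv (j : ℕ) γ t i

def Wronskian {m : ℕ} (γ : ℝ → Fin m → ℝ) (t : ℝ) : ℝ := (Wmat γ t).det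

def PosLocConv {m : ℕ} (γ : ℝ → Fin m → ℝ) : Prop :=
  ∀ t ∈ Set.Icc (0 : ℝ) 1, 0 < Wronskian γ t

def IsFrameAt {m : ℕ} (γ : ℝ → Fin m → ℝ) (t : ℝ) (F : Matrix (Fin m) (Fin m) ℝ) : Prop :=
  Fᵀ * F = 1 ∧ F.det = 1 ∧ ∃ R, IsUpperPos R ∧ Wmat γ t = F * R

def IsFrenet {m : ℕ} (γ : ℝ → Fin m → ℝ) (F : ℝ → Matrix (Fin m) (Fin m) ℝ) : Prop :=
  ∀ t ∈ Set.Icc (0 : ℝ) 1, IsFrameAt γ t (F t)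

def e1 {m : ℕ} : Fin m → ℝ := fun i => if (i : ℕ) = 0 then 1 else 0

def frobNorm {m : ℕ} (M : Matrix (Fin m) (Fin m) ℝ) : ℝ :=
  Real.sqrt (∑ i, ∑ j, (M i j) ^ 2)

/-! ### Auxiliary material for stmt3 -/

theorem Equiv.Perm.inv_apply_self {α : Type*} (f : Equiv.Perm α) (x : α) : f⁻¹ (f x) = x :=
  f.symm_apply_apply x

theorem Equiv.Perm.apply_inv_self {α : Type*} (f : Equiv.Perm α) (x : α) : f (f⁻¹ x) = x :=
  f.apply_symm_apply x

def neCount {m : ℕ} (σ : Equiv.Perm (Fin m)) (i : Fin m) : ℕ :=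
  (Finset.univ.filter fun i' => i' < i ∧ σ i < σ i').card

def nwCount {m : ℕ} (σ : Equiv.Perm (Fin m)) (i : Fin m) : ℕ :=
  (Finset.univ.filter fun i' => i' < i ∧ σ i' < σ i).card

lemma neCount_add_nwCount {m : ℕ} (σ : Equiv.Perm (Fin m)) (i : Fin m) :
    neCount σ i + nwCount σ i = (i : ℕ) := by
  classical
  have hdisj : Disjoint (Finset.univ.filter fun i' => i' < i ∧ σ i < σ i')
      (Finset.univ.filter fun i' : Fin m => i' < i ∧ σ i' < σ i) := by
    rw [Finset.disjoint_filter]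
    rintro x - ⟨-, h1⟩ ⟨-, h2⟩
    exact absurd (h1.trans h2) (lt_irrefl _)
  have hunion : (Finset.univ.filter fun i' => i' < i ∧ σ i < σ i') ∪
      (Finset.univ.filter fun i' : Fin m => i' < i ∧ σ i' < σ i) =
      Finset.univ.filter fun i' => i' < i := by
    rw [← Finset.filter_or]
    apply Finset.filter_congr
    intro x _
    constructor
    · rintro (⟨h, -⟩ | ⟨h, -⟩) <;> exact h
    · intro h
      rcases lt_or_gt_of_ne (fun he : σ x = σ i => (ne_of_lt h) (σ.injective he)) with h'|h'
      · exact Or.inr ⟨h, h'⟩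
      · exact Or.inl ⟨h, h'⟩
  have hcard : (Finset.univ.filter fun i' : Fin m => i' < i).card = (i : ℕ) := by
    have he : (Finset.univ.filter fun i' : Fin m => i' < i) = Finset.Iio i := by
      ext x; simp
    rw [he, Fin.card_Iio]
  rw [neCount, nwCount, ← Finset.card_union_of_disjoint hdisj, hunion, hcard]

lemma nwCount_inv {m : ℕ} (σ : Equiv.Perm (Fin m)) (i : Fin m) :
    nwCount σ⁻¹ (σ i) = nwCount σ i := by
  classical
  unfold nwCount
  refine Finset.card_bij' (fun a _ => σ⁻¹ a) (fun b _ => σ b) ?_ ?_ ?_ ?_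
  · intro a ha
    simp only [Finset.mem_filter, Finset.mem_univ, true_and, Equiv.Perm.inv_apply_self] at ha ⊢
    exact ⟨ha.2, by simpa using ha.1⟩
  · intro b hb
    simp only [Finset.mem_filter, Finset.mem_univ, true_and, Equiv.Perm.inv_apply_self] at hb ⊢
    exact ⟨hb.2, by simpa using hb.1⟩
  · intro a _; simp
  · intro b _; simp

lemma neCount_inv_add_nwCount {m : ℕ} (σ : Equiv.Perm (Fin m)) (i : Fin m) :
    neCount σ⁻¹ (σ i) + nwCount σ i = ((σ i : ℕ)) := by
  rw [← nwCount_inv σ i]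
  exact neCount_add_nwCount σ⁻¹ (σ i)

lemma parity_key {m : ℕ} (σ : Equiv.Perm (Fin m)) (i : Fin m) :
    (-1 : ℝ) ^ (neCount σ i) * (-1 : ℝ) ^ (neCount σ⁻¹ (σ i)) =
      (-1 : ℝ) ^ ((i : ℕ) + ((σ i : ℕ))) := by
  have h1 := neCount_add_nwCount σ i
  have h2 := neCount_inv_add_nwCount σ i
  have h3 : (i : ℕ) + ((σ i : ℕ)) = (neCount σ i + neCount σ⁻¹ (σ i)) + 2 * nwCount σ i := by
    omega
  rw [h3, pow_add, pow_mul, pow_add]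
  norm_num

lemma signAux_eq_sign {n : ℕ} (σ : Equiv.Perm (Fin n)) :
    Equiv.Perm.signAux σ = Equiv.Perm.sign σ := by
  refine Equiv.Perm.swap_induction_on σ (by simp) ?_
  intro f x y hxy ih
  rw [Equiv.Perm.signAux_mul, Equiv.Perm.signAux_swap hxy, _root_.map_mul,
    Equiv.Perm.sign_swap hxy, ih]

lemma sign_eq_neg_one_pow {n : ℕ} (σ : Equiv.Perm (Fin n)) :
    (Equiv.Perm.sign σ : ℤ) = (-1 : ℤ) ^ (∑ i, neCount σ i) := by
  classical
  rw [← signAux_eq_sign]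
  have hset : (Equiv.Perm.finPairsLT n).filter (fun x => σ x.1 ≤ σ x.2) =
      Finset.univ.sigma fun i : Fin n =>
        Finset.univ.filter fun i' => i' < i ∧ σ i < σ i' := by
    ext ⟨a, b⟩
    simp only [Finset.mem_filter, Equiv.Perm.mem_finPairsLT, Finset.mem_sigma, Finset.mem_univ,
      true_and]
    constructor
    · rintro ⟨hba, hle⟩
      refine ⟨hba, lt_of_le_of_ne hle ?_⟩
      intro he
      exact (ne_of_lt hba) (σ.injective he).symm
    · rintro ⟨hba, hlt⟩
      exact ⟨hba, le_of_lt hlt⟩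
  have hcard : ((Equiv.Perm.finPairsLT n).filter (fun x => σ x.1 ≤ σ x.2)).card
      = ∑ i, neCount σ i := by
    rw [hset, Finset.card_sigma]
    rfl
  have : Equiv.Perm.signAux σ = (-1 : ℤˣ) ^ (∑ i, neCount σ i) := by
    rw [Equiv.Perm.signAux, ← hcard]
    rw [Finset.prod_ite, Finset.prod_const, Finset.prod_const, one_pow, mul_one]
  rw [this]
  push_cast
  rfl

lemma neg_one_pow_real (n : ℕ) : (-1 : ℝ) ^ n = 1 ∨ (-1 : ℝ) ^ n = -1 := by
  rcases Nat.even_or_odd n with h | h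
  · exact Or.inl h.neg_one_pow
  · exact Or.inr h.neg_one_pow

/-- For a matrix supported on the graph of a permutation `τ`, the `NE` count at `(i, τ i)`
agrees with the combinatorial count `neCount τ i`. -/
lemma NE_eq_neCount {m : ℕ} (Q : Matrix (Fin m) (Fin m) ℝ) (τ : Equiv.Perm (Fin m))
    (hsupp : ∀ a b, Q a b ≠ 0 ↔ τ a = b) (i : Fin m) :
    NE Q i (τ i) = neCount τ i := by
  classical
  unfold NE neCount
  refine Finset.card_bij' (fun p _ => p.1) (fun a _ => (a, τ a)) ?_ ?_ ?_ ?_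
  · rintro ⟨a, b⟩ hp
    simp only [Finset.mem_filter, Finset.mem_univ, true_and] at hp ⊢
    rcases hp with ⟨h1, h2, h3⟩
    have hb : τ a = b := (hsupp a b).1 h3
    exact ⟨h1, hb ▸ h2⟩
  · intro a ha
    simp only [Finset.mem_filter, Finset.mem_univ, true_and] at ha ⊢
    exact ⟨ha.1, ha.2, (hsupp a (τ a)).2 rfl⟩
  · rintro ⟨a, b⟩ hp
    simp only [Finset.mem_filter, Finset.mem_univ, true_and] at hp
    have hb : τ a = b := (hsupp a b).1 hp.2.2
    simp [hb]
  · intro a ha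
    rfl

lemma deltaRow_of_perm {m : ℕ} (Q : Matrix (Fin m) (Fin m) ℝ) (τ : Equiv.Perm (Fin m))
    (hsupp : ∀ a b, Q a b ≠ 0 ↔ τ a = b) (i : Fin m) :
    deltaRow Q i = Q i (τ i) * (-1 : ℝ) ^ (neCount τ i) := by
  classical
  unfold deltaRow
  rw [Finset.sum_eq_single (τ i)]
  · rw [NE_eq_neCount Q τ hsupp]
  · intro b _ hb
    have : Q i b = 0 := by
      by_contra h
      exact hb ((hsupp i b).1 h).symm
    rw [this, zero_mul]
  · intro h
    exact absurd (Finset.mem_univ (τ i)) h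

theorem stmt3 (m : ℕ) (hm : 1 ≤ m) (d₁ d₂ : Fin m → ℝ)
    (h1 : ∀ i, d₁ i = 1 ∨ d₁ i = -1) (h2 : ∀ i, d₂ i = 1 ∨ d₂ i = -1)
    (hdet1 : (Matrix.diagonal d₁).det = 1) (hdet2 : (Matrix.diagonal d₂).det = 1)
    (htr : (Matrix.diagonal d₁).trace = (Matrix.diagonal d₂).trace) :
    ∃ Q : Matrix (Fin m) (Fin m) ℝ, IsSignedPerm Q ∧ Q.det = 1 ∧
      DeltaM Q = Matrix.diagonal d₁ ∧ DeltaM (TR Q) = Matrix.diagonal d₂ := by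
  classical
  -- products of the diagonal entries
  have hprod1 : ∏ i, d₁ i = 1 := by rwa [Matrix.det_diagonal] at hdet1
  -- equal numbers of +1 entries
  have key : ∀ d : Fin m → ℝ, (∀ i, d i = 1 ∨ d i = -1) →
      ∑ i, d i = 2 * ((Finset.univ.filter fun i => d i = 1).card : ℝ) - m := by
    intro d hd
    have hc : ∀ i ∈ Finset.univ, d i = 2 * (if d i = 1 then (1 : ℝ) else 0) - 1 := by
      intro i _; rcases hd i with h | h <;> rw [h] <;> norm_num
    rw [Finset.sum_congr rfl hc, Finset.sum_sub_distrib, ← Finset.mul_sum]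
    simp [Finset.sum_boole]
  have hcard : (Finset.univ.filter fun i => d₁ i = 1).card
      = (Finset.univ.filter fun i => d₂ i = 1).card := by
    have h₁ := key d₁ h1
    have h₂ := key d₂ h2
    rw [Matrix.trace_diagonal, Matrix.trace_diagonal, h₁, h₂] at htr
    have : ((Finset.univ.filter fun i => d₁ i = 1).card : ℝ)
        = ((Finset.univ.filter fun i => d₂ i = 1).card : ℝ) := by linarith
    exact_mod_cast this
  -- the permutation matching the signs
  obtain ⟨σ, hσ⟩ : ∃ σ : Equiv.Perm (Fin m), ∀ j, d₂ (σ j) = d₁ j := by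
    have hcs : Fintype.card {i // d₁ i = 1} = Fintype.card {i // d₂ i = 1} := by
      rw [Fintype.card_subtype, Fintype.card_subtype]; exact hcard
    have hcs' : Fintype.card {i // ¬ d₁ i = 1} = Fintype.card {i // ¬ d₂ i = 1} := by
      rw [Fintype.card_subtype_compl, Fintype.card_subtype_compl, hcs]
    set e := Fintype.equivOfCardEq hcs with he
    set e' := Fintype.equivOfCardEq hcs' with he'
    refine ⟨((Equiv.sumCompl fun i => d₁ i = 1).symm.trans (e.sumCongr e')).trans
      (Equiv.sumCompl fun i => d₂ i = 1), ?_⟩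
    intro j
    by_cases h : d₁ j = 1
    · have hv : (((Equiv.sumCompl fun i => d₁ i = 1).symm.trans (e.sumCongr e')).trans
          (Equiv.sumCompl fun i => d₂ i = 1)) j = (e ⟨j, h⟩ : {i // d₂ i = 1}).val := by
        simp [Equiv.trans_apply, Equiv.sumCompl_symm_apply_of_pos (p := fun i => d₁ i = 1) h]
      rw [hv, (e ⟨j, h⟩).prop, h]
    · have hv : (((Equiv.sumCompl fun i => d₁ i = 1).symm.trans (e.sumCongr e')).trans
          (Equiv.sumCompl fun i => d₂ i = 1)) j = (e' ⟨j, h⟩ : {i // ¬ d₂ i = 1}).val := by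
        simp [Equiv.trans_apply, Equiv.sumCompl_symm_apply_of_neg (p := fun i => d₁ i = 1) h]
      have hne := (e' ⟨j, h⟩).prop
      rw [hv]
      rcases h2 (e' ⟨j, h⟩ : {i // ¬ d₂ i = 1}).val with hx | hx
      · exact absurd hx hne
      · rcases h1 j with hy | hy
        · exact absurd hy h
        · rw [hx, hy]
  -- the signed permutation matrix
  set Q : Matrix (Fin m) (Fin m) ℝ :=
    Matrix.of fun i j => if σ i = j then d₁ i * (-1 : ℝ) ^ (neCount σ i) else 0 with hQ
  have hεne : ∀ i, d₁ i * (-1 : ℝ) ^ (neCount σ i) ≠ 0 := by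
    intro i
    have h₁ : d₁ i ≠ 0 := by rcases h1 i with h | h <;> rw [h] <;> norm_num
    have h₂ : (-1 : ℝ) ^ (neCount σ i) ≠ 0 := by
      rcases neg_one_pow_real (neCount σ i) with h | h <;> rw [h] <;> norm_num
    exact mul_ne_zero h₁ h₂
  have hQsupp : ∀ a b, Q a b ≠ 0 ↔ σ a = b := by
    intro a b
    by_cases h : σ a = b <;> simp [hQ, h, hεne a]
  have hQval : ∀ a, Q a (σ a) = d₁ a * (-1 : ℝ) ^ (neCount σ a) := by
    intro a; simp [hQ]
  -- Q is a signed permutation matrix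
  have hsp : IsSignedPerm Q := by
    refine ⟨?_, ?_, ?_⟩
    · intro i
      refine ⟨σ i, (hQsupp i (σ i)).2 rfl, fun j hj => ((hQsupp i j).1 hj).symm⟩
    · intro j
      refine ⟨σ⁻¹ j, (hQsupp (σ⁻¹ j) j).2 (σ.apply_inv_self j), fun i hi => ?_⟩
      have := (hQsupp i j).1 hi
      rw [← this, Equiv.Perm.inv_apply_self]
    · intro i j hij
      have hji : σ i = j := (hQsupp i j).1 hij
      rw [← hji, hQval i]
      rcases h1 i with h | h <;> rcases neg_one_pow_real (neCount σ i) with h' | h' <;>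
        rw [h, h'] <;> norm_num
  -- determinant
  have hQdet : Q.det = 1 := by
    have hfact : Q = Matrix.diagonal (fun i => d₁ i * (-1 : ℝ) ^ (neCount σ i)) *
        Equiv.Perm.permMatrix ℝ σ := by
      ext a b
      rw [Matrix.diagonal_mul]
      simp only [hQ, Matrix.of_apply, Equiv.Perm.permMatrix, PEquiv.toMatrix_apply,
        Equiv.toPEquiv_apply, Option.mem_def, Option.some.injEq]
      by_cases h : σ a = b <;> simp [h]
    rw [hfact, Matrix.det_mul, Matrix.det_diagonal, Matrix.det_permutation]
    have hprodsplit : ∏ i, (d₁ i * (-1 : ℝ) ^ (neCount σ i))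
        = (-1 : ℝ) ^ (∑ i, neCount σ i) := by
      rw [Finset.prod_mul_distrib, hprod1, one_mul, Finset.prod_pow_eq_pow_sum]
    have hsign : ((Equiv.Perm.sign σ : ℤ) : ℝ) = (-1 : ℝ) ^ (∑ i, neCount σ i) := by
      rw [sign_eq_neg_one_pow]; push_cast; ring
    rw [hprodsplit, hsign, ← pow_add]
    exact Even.neg_one_pow ⟨∑ i, neCount σ i, by ring⟩
  -- DeltaM Q = diagonal d₁
  have hδ1 : DeltaM Q = Matrix.diagonal d₁ := by
    have hδrow : deltaRow Q = d₁ := by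
      funext i
      rw [deltaRow_of_perm Q σ hQsupp i, hQval i, mul_assoc, ← pow_add,
        Even.neg_one_pow ⟨neCount σ i, by ring⟩, mul_one]
    rw [DeltaM, hδrow]
  -- entries of TR Q
  have hTR : ∀ a b, TR Q a b = (-1 : ℝ) ^ (a : ℕ) * Q b a * (-1 : ℝ) ^ (b : ℕ) := by
    intro a b
    rw [TR, Jplus, Matrix.mul_diagonal, Matrix.diagonal_mul, Matrix.transpose_apply]
  have hTsupp : ∀ a b, TR Q a b ≠ 0 ↔ σ⁻¹ a = b := by
    intro a b
    rw [hTR]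
    have h₂ : (-1 : ℝ) ^ (a : ℕ) ≠ 0 ∧ (-1 : ℝ) ^ (b : ℕ) ≠ 0 := by
      constructor <;> [rcases neg_one_pow_real (a : ℕ) with h | h;
        rcases neg_one_pow_real (b : ℕ) with h | h] <;> rw [h] <;> norm_num
    constructor
    · intro h
      have : Q b a ≠ 0 := fun hz => h (by rw [hz]; ring)
      have := (hQsupp b a).1 this
      rw [← this, Equiv.Perm.inv_apply_self]
    · intro h
      have hba : σ b = a := by rw [← h, Equiv.Perm.apply_inv_self]
      have : Q b a ≠ 0 := (hQsupp b a).2 hba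
      exact mul_ne_zero (mul_ne_zero h₂.1 this) h₂.2
  -- DeltaM (TR Q) = diagonal d₂
  have hδ2 : DeltaM (TR Q) = Matrix.diagonal d₂ := by
    have hδrow : deltaRow (TR Q) = d₂ := by
      funext i
      rw [deltaRow_of_perm (TR Q) σ⁻¹ hTsupp i, hTR]
      have hQv : Q (σ⁻¹ i) i = d₁ (σ⁻¹ i) * (-1 : ℝ) ^ (neCount σ (σ⁻¹ i)) := by
        have := hQval (σ⁻¹ i)
        rwa [Equiv.Perm.apply_inv_self] at this
      have hp := parity_key σ (σ⁻¹ i)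
      rw [Equiv.Perm.apply_inv_self] at hp
      have hd : d₂ i = d₁ (σ⁻¹ i) := by
        have := hσ (σ⁻¹ i)
        rwa [Equiv.Perm.apply_inv_self] at this
      rw [hQv, hd]
      have expand : (-1 : ℝ) ^ (i : ℕ) * (d₁ (σ⁻¹ i) * (-1 : ℝ) ^ (neCount σ (σ⁻¹ i))) *
          (-1 : ℝ) ^ ((σ⁻¹ i : Fin m) : ℕ) * (-1 : ℝ) ^ (neCount σ⁻¹ i)
          = d₁ (σ⁻¹ i) * (((-1 : ℝ) ^ (neCount σ (σ⁻¹ i)) * (-1 : ℝ) ^ (neCount σ⁻¹ i)) *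
            ((-1 : ℝ) ^ (i : ℕ) * (-1 : ℝ) ^ ((σ⁻¹ i : Fin m) : ℕ))) := by ring
      rw [expand, hp, ← pow_add, ← pow_add]
      have heven : Even (((σ⁻¹ i : Fin m) : ℕ) + (i : ℕ) + ((i : ℕ) + ((σ⁻¹ i : Fin m) : ℕ))) :=
        ⟨(i : ℕ) + ((σ⁻¹ i : Fin m) : ℕ), by ring⟩
      rw [heven.neg_one_pow, mul_one]
    rw [DeltaM, hδrow]
  exact ⟨Q, hsp, hQdet, hδ1, hδ2⟩
end
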